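/- Let T_k be the k×k '2-tridiagonal' matrix with diagonal (−a²+b², −2a²+b², ..., −2a²+b², −a²+b²) and entries a² in positions (i,i+2) and (i+2,i). If k is even, then det(T_k) = ((−a²+b²)·w(k/2 − 1) − a⁴·w(k/2 − 2))², where w(i) = (−2a²+b²)·w(i−1) − a⁴·w(i−2), w(0)=1, w(−1)=0. -/

import Mathlib

lemma succAbove_val {n : ℕ} (p : Fin (n+1)) (j : Fin n) :
    (p.succAbove j).1 = if j.1 < p.1 then j.1 else j.1 + 1 := by
  rw [Fin.succAbove]
  split_ifs with h h' h' <;> simp_all [Fin.lt_def]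

lemma tridet {K : Type*} [Field K] (B c : K) (w : ℤ → K)
    (hw0 : w 0 = 1) (hwneg : ∀ i : ℤ, i < 0 → w i = 0)
    (hw : ∀ i : ℤ, 1 ≤ i → w i = B * w (i-1) - c^2 * w (i-2)) :
    ∀ n : ℕ, ∀ A : K, ∀ M : Matrix (Fin (n+1)) (Fin (n+1)) K,
    (∀ i j : Fin (n+1), M i j = if i.1 = j.1 then (if i.1 = 0 then A else B)
      else if j.1 = i.1 + 1 ∨ i.1 = j.1 + 1 then c else 0) →
    M.det = A * w n - c^2 * w ((n:ℤ) - 1) := by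
  intro n
  induction n using Nat.strong_induction_on with
  | _ n IH =>
  match n with
  | 0 =>
    intro A M hM
    rw [Matrix.det_fin_one, hM]
    simp [hw0, hwneg (-1) (by norm_num)]
  | 1 =>
    intro A M hM
    have h1 : w 1 = B := by
      rw [hw 1 (by norm_num)]; norm_num [hw0, hwneg (-1) (by norm_num)]
    rw [Matrix.det_fin_two, hM, hM, hM, hM]
    norm_num [h1, hw0]
    ring
  | (m+2) =>
    intro A M hM
    have hw2 : w ((m:ℤ)+2) = B * w ((m:ℤ)+1) - c^2 * w (m:ℤ) := by
      have := hw ((m:ℤ)+2) (by omega)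
      rw [show (m:ℤ)+2-1 = (m:ℤ)+1 by ring, show (m:ℤ)+2-2 = (m:ℤ) by ring] at this
      exact this
    have hw1 : w ((m:ℤ)+1) = B * w (m:ℤ) - c^2 * w ((m:ℤ)-1) := by
      have := hw ((m:ℤ)+1) (by omega)
      rw [show (m:ℤ)+1-1 = (m:ℤ) by ring, show (m:ℤ)+1-2 = (m:ℤ)-1 by ring] at this
      exact this
    -- first minor: delete row 0, column 0
    have key1 : (M.submatrix Fin.succ ((0 : Fin (m+3)).succAbove)).det = w ((m:ℤ)+2) := by
      have h := IH (m+1) (by omega) B (M.submatrix Fin.succ ((0 : Fin (m+3)).succAbove)) ?_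
      · rw [h]; push_cast
        rw [show ((m:ℤ)+1)-1 = (m:ℤ) by ring, ← hw2]
      · intro i j
        have hv : (((0 : Fin (m+3)).succAbove) j).1 = j.1 + 1 := by
          rw [succAbove_val]; simp
        rw [Matrix.submatrix_apply, hM]
        simp only [Fin.val_succ, hv]
        split_ifs <;> first | rfl | omega | (exfalso; casesm* _ ∨ _, False <;> omega) | exact absurd (Or.inr trivial) (by assumption)
    -- second minor chain
    have key2 : (M.submatrix Fin.succ (((0:Fin (m+2)).succ).succAbove)).det = c * w ((m:ℤ)+1) := by
      set N := M.submatrix Fin.succ (((0:Fin (m+2)).succ).succAbove) with hN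
      have hp : (((0:Fin (m+2)).succ : Fin (m+3)) : ℕ) = 1 := rfl
      have hvs : ∀ j : Fin (m+1), ((((0:Fin (m+2)).succ).succAbove) j.succ).1 = j.1 + 2 := by
        intro j
        rw [succAbove_val, hp, Fin.val_succ]
        simp
      have hv0 : ((((0:Fin (m+2)).succ).succAbove) (0 : Fin (m+2))).1 = 0 := by
        rw [succAbove_val, hp]
        simp
      have key3 : (N.submatrix ((0:Fin (m+2)).succAbove) Fin.succ).det = w ((m:ℤ)+1) := by
        have h := IH m (by omega) B (N.submatrix ((0:Fin (m+2)).succAbove) Fin.succ) ?_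
        · rw [h]
          rw [← hw1]
        · intro i j
          have hv1 : (((0 : Fin (m+2)).succAbove) i).1 = i.1 + 1 := by
            rw [succAbove_val]; simp
          rw [Matrix.submatrix_apply, hN, Matrix.submatrix_apply, hM]
          simp only [Fin.val_succ, hvs j, hv1]
          split_ifs <;> first | rfl | omega | (exfalso; casesm* _ ∨ _, False <;> omega) | exact absurd (Or.inr trivial) (by assumption)
      rw [Matrix.det_succ_column_zero, Fin.sum_univ_succ]
      have hz : ∀ i : Fin (m+1), (-1:K)^((i.succ : Fin (m+2)) :ℕ) * N i.succ 0 *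
          (N.submatrix (i.succ).succAbove Fin.succ).det = 0 := by
        intro i
        have : N i.succ 0 = 0 := by
          rw [hN, Matrix.submatrix_apply, hM]
          simp only [Fin.val_succ, hv0]
          split_ifs <;> first | rfl | omega | (exfalso; casesm* _ ∨ _, False <;> omega) | exact absurd (Or.inr trivial) (by assumption)
        rw [this]; ring
      rw [Finset.sum_eq_zero (fun i _ => hz i)]
      have hN00 : N 0 0 = c := by
        rw [hN, Matrix.submatrix_apply, hM]
        simp only [Fin.val_succ, hv0, Fin.val_zero]
        split_ifs <;> first | rfl | omega | (exfalso; casesm* _ ∨ _, False <;> omega) | exact absurd (Or.inr trivial) (by assumption)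
      rw [hN00, key3]
      simp
    -- main expansion
    rw [Matrix.det_succ_row_zero, Fin.sum_univ_succ, Fin.sum_univ_succ]
    have hz : ∀ j : Fin (m+1), (-1:K)^((j.succ.succ : Fin (m+3)):ℕ) * M 0 j.succ.succ *
        (M.submatrix Fin.succ (j.succ.succ).succAbove).det = 0 := by
      intro j
      have : M 0 j.succ.succ = 0 := by
        rw [hM]
        simp only [Fin.val_zero, Fin.val_succ]
        split_ifs <;> first | rfl | omega | (exfalso; casesm* _ ∨ _, False <;> omega) | exact absurd (Or.inr trivial) (by assumption)
      rw [this]; ring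
    rw [Finset.sum_eq_zero (fun j _ => hz j)]
    have hM00 : M 0 0 = A := by rw [hM]; norm_num
    have hM01 : M 0 (0:Fin (m+2)).succ = c := by
      rw [hM]
      have hp : (((0:Fin (m+2)).succ : Fin (m+3)) : ℕ) = 1 := rfl
      simp only [Fin.val_zero, hp]
      norm_num
    rw [hM00, hM01, key1, key2]
    have hc : (((m+2:ℕ):ℤ)) = (m:ℤ)+2 := by push_cast; ring
    push_cast
    rw [show ((m:ℤ)+2)-1 = (m:ℤ)+1 by ring]
    simp only [Fin.val_zero, Fin.val_succ]
    ring_nf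

def interleave (m : ℕ) : Fin m ⊕ Fin m ≃ Fin (2*m) where
  toFun := Sum.elim (fun i => ⟨2*i.1, by have := i.isLt; omega⟩)
    (fun i => ⟨2*i.1+1, by have := i.isLt; omega⟩)
  invFun := fun p => if p.1 % 2 = 0 then Sum.inl ⟨p.1/2, by have := p.isLt; omega⟩
    else Sum.inr ⟨p.1/2, by have := p.isLt; omega⟩
  left_inv := by
    rintro (i|i) <;> simp only [Sum.elim_inl, Sum.elim_inr]
    · simp only [show 2*i.1 % 2 = 0 by omega, ↓reduceIte]
      exact congrArg Sum.inl (Fin.ext (show 2*i.1/2 = i.1 by omega))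
    · simp only [show ¬((2*i.1+1) % 2 = 0) by omega, ↓reduceIte]
      exact congrArg Sum.inr (Fin.ext (show (2*i.1+1)/2 = i.1 by omega))
  right_inv := by
    intro p
    dsimp only
    split_ifs with h
    · exact Fin.ext (show 2*(p.1/2) = p.1 by omega)
    · exact Fin.ext (show 2*(p.1/2)+1 = p.1 by omega)

lemma interleave_inl (m : ℕ) (i : Fin m) : ((interleave m) (Sum.inl i)).1 = 2*i.1 := rfl
lemma interleave_inr (m : ℕ) (i : Fin m) : ((interleave m) (Sum.inr i)).1 = 2*i.1+1 := rfl


/-- For `k` even (`k ≥ 2`), the determinant of the `k × k` "2-tridiagonal" matrix `T_k`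
with diagonal `(-a²+b², -2a²+b², …, -2a²+b², -a²+b²)` and entries `a²` at positions
`(i, i+2)` and `(i+2, i)` equals `((-a²+b²) w(k/2-1) - a⁴ w(k/2-2))²`, where
`w(-1) = 0`, `w 0 = 1`, `w i = (-2a²+b²) w(i-1) - a⁴ w(i-2)`. -/
theorem stmt11 {K : Type*} [Field K] (a b : K) (k : ℕ) (hk2 : 2 ≤ k) (hke : k % 2 = 0)
    (T : Matrix (Fin k) (Fin k) K)
    (hT : ∀ p q : Fin k, T p q =
      if p.1 = q.1 then
        (if p.1 = 0 ∨ p.1 = k - 1 then -a ^ 2 + b ^ 2 else -2 * a ^ 2 + b ^ 2)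
      else if q.1 = p.1 + 2 ∨ p.1 = q.1 + 2 then a ^ 2
      else 0)
    (w : ℤ → K) (hwneg : ∀ i : ℤ, i < 0 → w i = 0) (hw0 : w 0 = 1)
    (hw : ∀ i : ℤ, 1 ≤ i → w i = (-2 * a ^ 2 + b ^ 2) * w (i - 1) - a ^ 4 * w (i - 2)) :
    T.det = ((-a ^ 2 + b ^ 2) * w ((k / 2 : ℕ) - 1) - a ^ 4 * w ((k / 2 : ℕ) - 2)) ^ 2 := by
  obtain ⟨m, rfl⟩ : ∃ m, k = 2*m := ⟨k/2, by omega⟩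
  have hdiv : 2*m/2 = m := by omega
  rw [hdiv]
  obtain ⟨m', rfl⟩ : ∃ m', m = m'+1 := ⟨m-1, by omega⟩
  set A : K := -a^2+b^2 with hA
  set B : K := -2*a^2+b^2 with hB
  set c : K := a^2 with hc
  have hc2 : c^2 = a^4 := by rw [hc]; ring
  have hw' : ∀ i : ℤ, 1 ≤ i → w i = B * w (i-1) - c^2 * w (i-2) := by
    intro i hi; rw [hc2, hB]; exact hw i hi
  set e := interleave (m'+1) with he
  have he1 := interleave_inl (m'+1)
  have he2 := interleave_inr (m'+1)
  set M₁ : Matrix (Fin (m'+1)) (Fin (m'+1)) K := fun i j => T (e (Sum.inl i)) (e (Sum.inl j)) with hM₁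
  set M₂ : Matrix (Fin (m'+1)) (Fin (m'+1)) K := fun i j => T (e (Sum.inr i)) (e (Sum.inr j)) with hM₂
  have hblock : T.submatrix ⇑e ⇑e = Matrix.fromBlocks M₁ 0 0 M₂ := by
    ext p q
    cases p with
    | inl i =>
      cases q with
      | inl j => rfl
      | inr j =>
        simp only [Matrix.submatrix_apply, Matrix.fromBlocks_apply₁₂, Matrix.zero_apply]
        rw [hT]
        simp only [he, he1, he2]
        split_ifs <;> first | rfl | omega | (exfalso; casesm* _ ∨ _, False <;> omega) | exact absurd (Or.inr (by omega)) (by assumption)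
    | inr i =>
      cases q with
      | inl j =>
        simp only [Matrix.submatrix_apply, Matrix.fromBlocks_apply₂₁, Matrix.zero_apply]
        rw [hT]
        simp only [he, he1, he2]
        split_ifs <;> first | rfl | omega | (exfalso; casesm* _ ∨ _, False <;> omega) | exact absurd (Or.inr (by omega)) (by assumption)
      | inr j => rfl
  have hdetT : T.det = M₁.det * M₂.det := by
    rw [← Matrix.det_submatrix_equiv_self e T, hblock, Matrix.det_fromBlocks_zero₁₂]
  have hd1 : M₁.det = A * w m' - c^2 * w ((m':ℤ) - 1) := by
    apply tridet B c w hw0 hwneg hw' m' A M₁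
    intro i j
    rw [hM₁]
    dsimp only
    rw [hT]
    simp only [he, he1, he2]
    have hi := i.isLt
    have hj := j.isLt
    split_ifs <;> first | rfl | omega | (exfalso; casesm* _ ∨ _, False <;> omega) | exact absurd (Or.inr (by omega)) (by assumption)
  have hd2 : M₂.det = A * w m' - c^2 * w ((m':ℤ) - 1) := by
    rw [← Matrix.det_submatrix_equiv_self (Fin.revPerm) M₂]
    apply tridet B c w hw0 hwneg hw' m' A
    intro i j
    rw [Matrix.submatrix_apply, hM₂]
    simp only [Fin.revPerm_apply]
    rw [hT]
    simp only [he, he1, he2]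
    have hi := i.isLt
    have hj := j.isLt
    have hri : (Fin.rev i).1 = (m'+1) - (i.1 + 1) := Fin.val_rev i
    have hrj : (Fin.rev j).1 = (m'+1) - (j.1 + 1) := Fin.val_rev j
    rw [hri, hrj]
    split_ifs <;> first | rfl | omega | (exfalso; casesm* _ ∨ _, False <;> omega) | exact absurd (Or.inr (by omega)) (by assumption)
  rw [hdetT, hd1, hd2, hc2]
  have hcast1 : ((m'+1 : ℕ) : ℤ) - 1 = (m' : ℤ) := by push_cast; ring
  have hcast2 : ((m'+1 : ℕ) : ℤ) - 2 = (m' : ℤ) - 1 := by push_cast; ring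
  rw [hcast1, hcast2]
  ring
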